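/- The constraint simplification rules (Trans), (Dec), (Glb), (Lub) for flat subtype constraints over a lattice of constructors terminate: no rule increases the temperature t, and each rule application strictly decreases the lexicographic measure (t, e), where e = 2^v − n with v the number of parameters and n the number of inequalities between parameters, and t is the sum of heights of constructors on the right of ≤ plus depths of constructors on the left of ≤. -/

import Mathlib

/-- Signature of type constructors forming a lattice, with arity-decreasing
order and compatible injective argument mappings. -/
structure LSig (K : Type) [Lattice K] where
  ar : K → ℕ
  ar_anti : ∀ {a b : K}, a ≤ b → ar b ≤ ar a
  iota : K → K → ℕ → ℕ
  iota_lt : ∀ {a b : K}, a ≤ b → ∀ {i}, i < ar b → iota a b i < ar a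
  iota_inj : ∀ {a b : K}, a ≤ b → ∀ {i j}, i < ar b → j < ar b →
    iota a b i = iota a b j → i = j
  iota_id : ∀ k i, iota k k i = i
  iota_comp : ∀ {a b c : K}, a ≤ b → b ≤ c → ∀ {i}, i < ar c →
    iota a c i = iota a b (iota b c i)

/-- Flat subtype constraints between parameters `P` and flat types:
`α ≤ β`, `K(α₁,…,αₙ) ≤ α`, or `α ≤ K(α₁,…,αₙ)`. -/
inductive FC (K P : Type) : Type
  | vv : P → P → FC K P
  | cv : K → List P → P → FC K P
  | vc : P → K → List P → FC K P
deriving DecidableEq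

variable {K P : Type} [Lattice K] [DecidableEq K] [DecidableEq P] [Inhabited P]

/-- Residual parameter inequalities posted by rule (Dec). -/
def residDec (S : LSig K) (k k' : K) (as as' : List P) : Finset (FC K P) :=
  (Finset.range (S.ar k')).image
    (fun j => FC.vv (as.getD (S.iota k k' j) default) (as'.getD j default))

/-- Residual parameter inequalities posted by rule (Glb): components of the two
upper bounds that share a slot of the glb constructor are compared. -/
def residGlb (S : LSig K) (k k' : K) (as as' : List P) : Finset (FC K P) :=
  (((Finset.range (S.ar k)) ×ˢ (Finset.range (S.ar k'))).filter
      (fun p => S.iota (k ⊓ k') k p.1 = S.iota (k ⊓ k') k' p.2)).image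
    (fun p => FC.vv (as.getD p.1 default) (as'.getD p.2 default))

/-- Residual parameter inequalities posted by rule (Lub). -/
def residLub (S : LSig K) (k k' : K) (as as' : List P) : Finset (FC K P) :=
  (Finset.range (S.ar (k ⊔ k'))).image
    (fun j => FC.vv (as.getD (S.iota k (k ⊔ k') j) default)
      (as'.getD (S.iota k' (k ⊔ k') j) default))

/-- The constraint simplification rules (Trans), (Dec), (Glb), (Lub). -/
inductive StepL (S : LSig K) : Finset (FC K P) → Finset (FC K P) → Prop
  | trans {E : Finset (FC K P)} {α β γ : P} :
      FC.vv α β ∈ E → FC.vv β γ ∈ E → FC.vv α γ ∉ E → α ≠ γ →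
      StepL S E (insert (FC.vv α γ) E)
  | dec {E : Finset (FC K P)} {k k' : K} {as as' : List P} {α : P} :
      FC.cv k as α ∈ E → FC.vc α k' as' ∈ E → k ≤ k' →
      as.length = S.ar k → as'.length = S.ar k' →
      ¬ residDec S k k' as as' ⊆ E →
      StepL S E (E ∪ residDec S k k' as as')
  | glb {E : Finset (FC K P)} {α β : P} {k k' : K} {as as' cs : List P} :
      FC.vv α β ∈ E → FC.vc α k as ∈ E → FC.vc β k' as' ∈ E →
      as.length = S.ar k → as'.length = S.ar k' → cs.length = S.ar (k ⊓ k') →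
      (∀ i, i < S.ar k → cs.getD (S.iota (k ⊓ k') k i) default = as.getD i default) →
      (∀ j, j < S.ar k' → (∀ i, i < S.ar k →
          S.iota (k ⊓ k') k i ≠ S.iota (k ⊓ k') k' j) →
        cs.getD (S.iota (k ⊓ k') k' j) default = as'.getD j default) →
      (k ⊓ k' ≠ k ∨ ¬ residGlb S k k' as as' ⊆ E) →
      StepL S E (insert (FC.vc α (k ⊓ k') cs)
        ((E.erase (FC.vc α k as)) ∪ residGlb S k k' as as'))
  | lub {E : Finset (FC K P)} {α β : P} {k k' : K} {as as' cs : List P} :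
      FC.vv α β ∈ E → FC.cv k as α ∈ E → FC.cv k' as' β ∈ E →
      as.length = S.ar k → as'.length = S.ar k' → cs.length = S.ar (k ⊔ k') →
      (∀ j, j < S.ar (k ⊔ k') →
        cs.getD j default = as'.getD (S.iota k' (k ⊔ k') j) default) →
      (k ⊔ k' ≠ k' ∨ ¬ residLub S k k' as as' ⊆ E) →
      StepL S E (insert (FC.cv (k ⊔ k') cs β)
        ((E.erase (FC.cv k' as' β)) ∪ residLub S k k' as as'))

/-- The height of a constructor: its distance to ⊥ in the lattice `K`. -/
noncomputable def htK (k : K) : ℕ := (Order.height k).toNat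

/-- The depth of a constructor: its distance to ⊤ in the lattice `K`. -/
noncomputable def dpK (k : K) : ℕ := (Order.coheight k).toNat

/-- The temperature of a system: the sum of the heights of the constructors on
the right of ≤ plus the depths of the constructors on the left of ≤. -/
noncomputable def tMeas (E : Finset (FC K P)) : ℕ :=
  E.sum (fun c => match c with
    | .vv _ _ => 0
    | .vc _ k _ => htK k
    | .cv k _ _ => dpK k)

/-- Whether a constraint is an inequality between parameters. -/
def FC.isVV : FC K P → Bool
  | .vv _ _ => true
  | _ => false

/-- The entropy of a system: `2^v − n`, `v` the number of parameters and `n`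
the number of inequalities between parameters. -/
def eMeas [Fintype P] (E : Finset (FC K P)) : ℤ :=
  2 ^ (Fintype.card P) - (E.filter (fun c => c.isVV)).card

set_option linter.unusedSectionVars false

noncomputable def fMeas : FC K P → ℕ
  | .vv _ _ => 0
  | .vc _ k _ => htK k
  | .cv k _ _ => dpK k

lemma tMeas_def (E : Finset (FC K P)) : tMeas E = E.sum fMeas :=
  Finset.sum_congr rfl (fun c _ => by cases c <;> rfl)

lemma enat_toNat_lt {m n : ℕ∞} (h : m < n) (hn : n ≠ ⊤) : m.toNat < n.toNat := by
  lift n to ℕ using hn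
  lift m to ℕ using h.ne_top
  simpa using h

lemma htK_fin [Fintype K] (k : K) : Order.height k ≠ ⊤ := by
  have hle : Order.height k ≤ (Fintype.card K : ℕ∞) :=
    Order.height_le fun p _ => by exact_mod_cast p.length_lt_card.le
  intro ht; rw [ht] at hle; exact (ENat.coe_lt_top _).not_ge hle

lemma dpK_fin [Fintype K] (k : K) : Order.coheight k ≠ ⊤ := by
  have hle : Order.coheight k ≤ (Fintype.card K : ℕ∞) :=
    Order.coheight_le fun p _ => by exact_mod_cast p.length_lt_card.le
  intro ht; rw [ht] at hle; exact (ENat.coe_lt_top _).not_ge hle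

lemma htK_lt_htK [Fintype K] {a b : K} (h : a < b) : htK a < htK b :=
  enat_toNat_lt (Order.height_strictMono h (lt_top_iff_ne_top.mpr (htK_fin a))) (htK_fin b)

lemma dpK_lt_dpK [Fintype K] {a b : K} (h : a < b) : dpK b < dpK a :=
  enat_toNat_lt (Order.coheight_strictAnti h (lt_top_iff_ne_top.mpr (dpK_fin b))) (dpK_fin a)

lemma residDec_vv (S : LSig K) (k k' : K) (as as' : List P) :
    ∀ c ∈ residDec S k k' as as', c.isVV = true := by
  intro c hc
  simp only [residDec, Finset.mem_image] at hc
  obtain ⟨j, _, rfl⟩ := hc; rfl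

lemma residGlb_vv (S : LSig K) (k k' : K) (as as' : List P) :
    ∀ c ∈ residGlb S k k' as as', c.isVV = true := by
  intro c hc
  simp only [residGlb, Finset.mem_image] at hc
  obtain ⟨j, _, rfl⟩ := hc; rfl

lemma residLub_vv (S : LSig K) (k k' : K) (as as' : List P) :
    ∀ c ∈ residLub S k k' as as', c.isVV = true := by
  intro c hc
  simp only [residLub, Finset.mem_image] at hc
  obtain ⟨j, _, rfl⟩ := hc; rfl

lemma fMeas_vv_zero {c : FC K P} (h : c.isVV = true) : fMeas c = 0 := by
  cases c <;> simp_all [FC.isVV, fMeas]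

lemma tMeas_union_vv (E R : Finset (FC K P)) (h : ∀ c ∈ R, c.isVV = true) :
    tMeas (E ∪ R) = tMeas E := by
  rw [tMeas_def, tMeas_def, ← Finset.union_sdiff_self_eq_union,
    Finset.sum_union Finset.disjoint_sdiff]
  rw [Finset.sum_eq_zero (fun c hc => fMeas_vv_zero (h c (Finset.mem_sdiff.mp hc).1)),
    add_zero]

lemma tMeas_insert_le (c : FC K P) (E : Finset (FC K P)) :
    tMeas (insert c E) ≤ fMeas c + tMeas E := by
  by_cases hc : c ∈ E
  · rw [Finset.insert_eq_self.mpr hc]; exact Nat.le_add_left _ _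
  · rw [tMeas_def, tMeas_def, Finset.sum_insert hc]

lemma card_vv_lt {E R : Finset (FC K P)} (hvv : ∀ c ∈ R, c.isVV = true)
    (hns : ¬ R ⊆ E) :
    (E.filter (fun c => c.isVV)).card < ((E ∪ R).filter (fun c => c.isVV)).card := by
  obtain ⟨r, hrR, hrE⟩ := Finset.not_subset.mp hns
  apply Finset.card_lt_card
  refine (Finset.ssubset_iff_of_subset
    (Finset.filter_subset_filter _ Finset.subset_union_left)).mpr ?_
  exact ⟨r, Finset.mem_filter.mpr ⟨Finset.mem_union_right _ hrR, hvv r hrR⟩,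
    fun hr => hrE (Finset.mem_filter.mp hr).1⟩

lemma card_vv_le [Fintype P] (E : Finset (FC K P)) :
    (E.filter (fun c => c.isVV)).card ≤ Fintype.card P * Fintype.card P := by
  classical
  have h := Finset.card_le_card_of_injOn
    (f := fun c : FC K P => (match c with | .vv a b => (a, b) | _ => (default, default) : P × P))
    (s := E.filter (fun c => c.isVV)) (t := Finset.univ)
    (fun c _ => Finset.mem_univ _) ?_
  · simpa [Fintype.card_prod] using h
  · intro c hc d hd hcd
    simp only [Finset.coe_filter, Set.mem_setOf_eq] at hc hd
    cases c <;> cases d <;> simp_all [FC.isVV]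
lemma step_main [Fintype K] [Fintype P] (S : LSig K) {E E' : Finset (FC K P)}
    (h : StepL S E E') :
    tMeas E' ≤ tMeas E ∧ (tMeas E' < tMeas E ∨ (tMeas E' = tMeas E ∧
      (E.filter (fun c => c.isVV)).card < (E'.filter (fun c => c.isVV)).card)) := by
  cases h with
  | @trans α β γ h1 h2 h3 h4 =>
    have ht : tMeas (insert (FC.vv α γ) E) = tMeas E := by
      rw [tMeas_def, tMeas_def, Finset.sum_insert h3]
      rw [show fMeas (FC.vv (K := K) α γ) = 0 from rfl, zero_add]
    refine ⟨ht.le, Or.inr ⟨ht, ?_⟩⟩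
    have hpos : (FC.vv (K := K) α γ).isVV = true := rfl
    rw [Finset.filter_insert, if_pos hpos,
      Finset.card_insert_of_notMem (fun hm => h3 (Finset.mem_filter.mp hm).1)]
    omega
  | @dec k k' as as' α h1 h2 hkk hl1 hl2 hns =>
    have hvv := residDec_vv S k k' as as'
    have ht := tMeas_union_vv E _ hvv
    exact ⟨ht.le, Or.inr ⟨ht, card_vv_lt hvv hns⟩⟩
  | @glb α β k k' as as' cs h1 h2 h3 hl1 hl2 hl3 hc1 hc2 hor =>
    have hvv := residGlb_vv S k k' as as'
    by_cases hk : k ⊓ k' = k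
    · have hcs : cs = as := by
        apply List.ext_getElem (by rw [hl3, hk, hl1])
        intro i hi1 hi2
        have hx := hc1 i (by omega)
        rw [hk, S.iota_id] at hx
        rw [← List.getD_eq_getElem _ default hi1, ← List.getD_eq_getElem _ default hi2]
        exact hx
      have hE' : insert (FC.vc α (k ⊓ k') cs)
          (E.erase (FC.vc α k as) ∪ residGlb S k k' as as')
          = E ∪ residGlb S k k' as as' := by
        rw [hk, hcs, ← Finset.insert_union, Finset.insert_erase h2]
      rw [hE']
      have hns : ¬ residGlb S k k' as as' ⊆ E := hor.resolve_left (by simp [hk])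
      have ht := tMeas_union_vv E _ hvv
      exact ⟨ht.le, Or.inr ⟨ht, card_vv_lt hvv hns⟩⟩
    · have hlt : k ⊓ k' < k := lt_of_le_of_ne inf_le_left hk
      have h5 : tMeas (E.erase (FC.vc α k as) ∪ residGlb S k k' as as')
          = tMeas (E.erase (FC.vc α k as)) := tMeas_union_vv _ _ hvv
      have h6 := tMeas_insert_le (FC.vc α (k ⊓ k') cs)
        (E.erase (FC.vc α k as) ∪ residGlb S k k' as as')
      have h7 : fMeas (FC.vc α (k ⊓ k') cs) = htK (k ⊓ k') := rfl
      have h8 : htK (k ⊓ k') < htK k := htK_lt_htK hlt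
      have h9 : htK k + tMeas (E.erase (FC.vc α k as)) = tMeas E := by
        rw [tMeas_def, tMeas_def]
        exact Finset.add_sum_erase E fMeas h2
      refine ⟨?_, Or.inl ?_⟩ <;> omega
  | @lub α β k k' as as' cs h1 h2 h3 hl1 hl2 hl3 hc1 hor =>
    have hvv := residLub_vv S k k' as as'
    by_cases hk : k ⊔ k' = k'
    · have hcs : cs = as' := by
        apply List.ext_getElem (by rw [hl3, hk, hl2])
        intro j hj1 hj2
        have hx := hc1 j (by omega)
        rw [hk, S.iota_id] at hx
        rw [← List.getD_eq_getElem _ default hj1, ← List.getD_eq_getElem _ default hj2]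
        exact hx
      have hE' : insert (FC.cv (k ⊔ k') cs β)
          (E.erase (FC.cv k' as' β) ∪ residLub S k k' as as')
          = E ∪ residLub S k k' as as' := by
        rw [hk, hcs, ← Finset.insert_union, Finset.insert_erase h3]
      rw [hE']
      have hns : ¬ residLub S k k' as as' ⊆ E := hor.resolve_left (by simp [hk])
      have ht := tMeas_union_vv E _ hvv
      exact ⟨ht.le, Or.inr ⟨ht, card_vv_lt hvv hns⟩⟩
    · have hlt : k' < k ⊔ k' := lt_of_le_of_ne le_sup_right (fun h => hk h.symm)
      have h5 : tMeas (E.erase (FC.cv k' as' β) ∪ residLub S k k' as as')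
          = tMeas (E.erase (FC.cv k' as' β)) := tMeas_union_vv _ _ hvv
      have h6 := tMeas_insert_le (FC.cv (k ⊔ k') cs β)
        (E.erase (FC.cv k' as' β) ∪ residLub S k k' as as')
      have h7 : fMeas (FC.cv (k ⊔ k') cs β) = dpK (k ⊔ k') := rfl
      have h8 : dpK (k ⊔ k') < dpK k' := dpK_lt_dpK hlt
      have h9 : dpK k' + tMeas (E.erase (FC.cv k' as' β)) = tMeas E := by
        rw [tMeas_def, tMeas_def]
        exact Finset.add_sum_erase E fMeas h3
      refine ⟨?_, Or.inl ?_⟩ <;> omega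

/-- the rules (Trans), (Dec), (Glb), (Lub) never increase the
temperature `t`, strictly decrease the lexicographic measure `(t, e)`, and
hence terminate. -/
theorem lattice_rules_terminate [Fintype K] [Fintype P] (S : LSig K) :
    (∀ E E' : Finset (FC K P), StepL S E E' →
      tMeas E' ≤ tMeas E ∧
      Prod.Lex (· < ·) (· < ·) ((tMeas E' : ℕ), eMeas E') (tMeas E, eMeas E)) ∧
    ¬ ∃ f : ℕ → Finset (FC K P), ∀ i, StepL S (f i) (f (i + 1)) := by
  constructor
  · intro E E' h
    obtain ⟨hle, hcase⟩ := step_main S h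
    refine ⟨hle, ?_⟩
    rcases hcase with hlt | ⟨heq, hcard⟩
    · exact Prod.Lex.left _ _ hlt
    · rw [heq]
      refine Prod.Lex.right _ ?_
      exact sub_lt_sub_left (by exact_mod_cast hcard) _
  · rintro ⟨f, hf⟩
    set B := Fintype.card P * Fintype.card P with hB
    let M : Finset (FC K P) → ℕ :=
      fun E => (B + 1) * tMeas E + (B - (E.filter (fun c => c.isVV)).card)
    have hM : ∀ i, M (f (i + 1)) < M (f i) := by
      intro i
      obtain ⟨hle, hcase⟩ := step_main S (hf i)
      have hb1 := card_vv_le (f i)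
      have hb2 := card_vv_le (f (i + 1))
      rcases hcase with hlt | ⟨heq, hcard⟩
      · have hx : (B + 1) * tMeas (f (i + 1)) + (B + 1) ≤ (B + 1) * tMeas (f i) := by
          calc (B + 1) * tMeas (f (i + 1)) + (B + 1)
              = (B + 1) * (tMeas (f (i + 1)) + 1) := by ring
            _ ≤ (B + 1) * tMeas (f i) := Nat.mul_le_mul_left _ (Nat.succ_le_of_lt hlt)
        simp only [M]
        omega
      · simp only [M]
        rw [heq]
        omega
    have hmono : ∀ n, M (f n) + n ≤ M (f 0) := by
      intro n
      induction n with
      | zero => omega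
      | succ n ih => have := hM n; omega
    have := hmono (M (f 0) + 1)
    omega
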